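/- For a prime p and integer k ≥ 0, the condition r_p(x) ∈ [a/p^k, (a+1)/p^k) for a nonnegative integer x and integer 0 ≤ a < p^k is equivalent to x ≡ a' (mod p^k), where a' is the integer obtained by reversing the k base-p digits of a. -/

import Mathlib

def revd (p k b : ℕ) : ℕ := ∑ j ∈ Finset.range k, b / p^j % p * p^(k-1-j)

lemma revd_succ_top (p k b : ℕ) : revd p (k+1) b = p * revd p k b + b / p^k % p := by
  unfold revd
  rw [Finset.sum_range_succ, Finset.mul_sum]
  congr 1
  · apply Finset.sum_congr rfl
    intro j hj
    have hj' : j < k := Finset.mem_range.mp hj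
    have h1 : k + 1 - 1 - j = (k - 1 - j) + 1 := by omega
    rw [h1, pow_succ]
    ring
  · simp

lemma revd_lt (p : ℕ) (hp : 1 < p) (k b : ℕ) : revd p k b < p ^ k := by
  induction k with
  | zero => simp [revd]
  | succ k ih =>
    rw [revd_succ_top, pow_succ]
    have h1 : b / p ^ k % p < p := Nat.mod_lt _ (by omega)
    have h2 : p * revd p k b ≤ p * (p ^ k - 1) := Nat.mul_le_mul_left _ (by omega)
    have h3 : 1 ≤ p ^ k := Nat.one_le_pow _ _ (by omega)
    have h4 : p ≤ p ^ k * p := Nat.le_mul_of_pos_left _ h3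
    have h5 : p * (p ^ k - 1) = p ^ k * p - p := by
      rw [Nat.mul_sub, Nat.mul_one, mul_comm]
    omega

lemma digit_mod (p : ℕ) {j k : ℕ} (hjk : j < k) (b : ℕ) :
    b % p ^ k / p ^ j % p = b / p ^ j % p := by
  have h : p ^ k = p ^ j * p ^ (k - j) := by rw [← pow_add]; congr 1; omega
  rw [h, Nat.mod_mul_right_div_self, Nat.mod_mod_of_dvd _ (dvd_pow_self p (by omega))]

lemma revd_mod (p k b : ℕ) : revd p k (b % p ^ k) = revd p k b := by
  unfold revd
  refine Finset.sum_congr rfl fun j hj => ?_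
  rw [digit_mod p (Finset.mem_range.mp hj)]

lemma revd_add (p : ℕ) (m n b : ℕ) :
    revd p (m + n) b = p ^ n * revd p m b + revd p n (b / p ^ m) := by
  induction n with
  | zero => simp [revd]
  | succ n ih =>
    rw [← Nat.add_assoc, revd_succ_top, ih, revd_succ_top, Nat.div_div_eq_div_mul, ← pow_add,
      pow_succ]
    ring_nf

lemma revd_one (p b : ℕ) : revd p 1 b = b % p := by simp [revd]

lemma revd_first (p k b : ℕ) : revd p (k + 1) b = b % p * p ^ k + revd p k (b / p) := by
  have h := revd_add p 1 k b
  rw [Nat.add_comm 1 k] at h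
  rw [h, revd_one, pow_one]
  ring

lemma revd_revd (p : ℕ) (hp : 1 < p) (k b : ℕ) : revd p k (revd p k b) = b % p ^ k := by
  induction k generalizing b with
  | zero => simp [revd, Nat.mod_one]
  | succ k ih =>
    rw [revd_first p k b]
    set r := revd p k (b / p) with hr
    have hrlt : r < p ^ k := revd_lt p hp k (b / p)
    have hpk : 0 < p ^ k := Nat.pow_pos (by omega)
    rw [revd_succ_top]
    have hdiv : (b % p * p ^ k + r) / p ^ k = b % p := by
      rw [Nat.add_comm, Nat.add_mul_div_right _ _ hpk, Nat.div_eq_of_lt hrlt, Nat.zero_add]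
    have hmod : (b % p * p ^ k + r) % p ^ k = r := by
      rw [Nat.mul_comm, Nat.mul_add_mod, Nat.mod_eq_of_lt hrlt]
    have hkey : revd p k (b % p * p ^ k + r) = b / p % p ^ k := by
      rw [← revd_mod p k, hmod, hr, ih]
    rw [hkey, hdiv, Nat.mod_mod_of_dvd _ dvd_rfl, pow_succ', Nat.mod_mul]
    omega



/-- `rdigits p x` is the real number in `[0,1)` obtained by reversing the base-`p`
digits of `x` across the radix point. -/
noncomputable def rdigits (p x : ℕ) : ℝ :=
  ∑' j : ℕ, ((x / p^j % p : ℕ) : ℝ) / (p:ℝ)^(j+1)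

/-- `r_p(x) ∈ [a/p^k, (a+1)/p^k)` iff `x ≡ a' (mod p^k)`, where `a'` is the reversal of the
`k` base-`p` digits of `a`. -/
theorem stmt_14 (p : ℕ) (hp : p.Prime) (k a : ℕ) (ha : a < p^k)
    (a' : ℕ) (ha' : a' = ∑ j ∈ Finset.range k, a / p^j % p * p^(k-1-j))
    (x : ℕ) :
    rdigits p x ∈ Set.Ico ((a:ℝ)/(p:ℝ)^k) (((a:ℝ)+1)/(p:ℝ)^k) ↔ x % p^k = a' := by
  have hp2 : 1 < p := hp.one_lt
  have hpR : (0:ℝ) < (p:ℝ) := by exact_mod_cast hp.pos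
  set N := k + x with hN
  have hxN : x < p ^ N := lt_of_le_of_lt (by omega) (Nat.lt_pow_self hp2 : N < p ^ N)
  have hkN : k ≤ N := by omega
  have hpk : (0:ℝ) < (p:ℝ)^k := by positivity
  have hpN : (0:ℝ) < (p:ℝ)^N := by positivity
  have hNsplit : (p:ℝ)^N = (p:ℝ)^k * (p:ℝ)^(N-k) := by
    rw [← pow_add]; congr 1; omega
  -- Step 1: rdigits as a finite reversal
  have hstep1 : rdigits p x = ((revd p N x : ℕ) : ℝ) / (p:ℝ)^N := by
    unfold rdigits
    rw [tsum_eq_sum (s := Finset.range N)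
      (fun j hj => by
        have hjN : N ≤ j := by simpa using hj
        have : x / p ^ j = 0 := Nat.div_eq_of_lt (lt_of_lt_of_le hxN
          (Nat.pow_le_pow_right (by omega) hjN))
        simp [this])]
    unfold revd
    push_cast
    rw [Finset.sum_div]
    refine Finset.sum_congr rfl fun j hj => ?_
    have hjN : j < N := Finset.mem_range.mp hj
    have hpow : (p:ℝ)^N = (p:ℝ)^(N-1-j) * (p:ℝ)^(j+1) := by
      rw [← pow_add]; congr 1; omega
    rw [hpow]
    field_simp
  -- Step 2: split the reversal
  have hsplit : revd p N x = p^(N-k) * revd p k x + revd p (N-k) (x / p^k) := by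
    have h := revd_add p k (N-k) x
    rwa [Nat.add_sub_cancel' hkN] at h
  have hrlt : revd p (N-k) (x/p^k) < p^(N-k) := revd_lt p hp2 _ _
  -- Step 3: membership iff revd p k x = a
  have hcast1 : (a:ℝ)/(p:ℝ)^k = ((a * p^(N-k) : ℕ):ℝ)/(p:ℝ)^N := by
    push_cast
    rw [hNsplit]
    field_simp
  have hcast2 : ((a:ℝ)+1)/(p:ℝ)^k = (((a+1) * p^(N-k) : ℕ):ℝ)/(p:ℝ)^N := by
    push_cast
    rw [hNsplit]
    field_simp
  have hmain : rdigits p x ∈ Set.Ico ((a:ℝ)/(p:ℝ)^k) (((a:ℝ)+1)/(p:ℝ)^k) ↔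
      revd p k x = a := by
    rw [Set.mem_Ico, hstep1, hcast1, hcast2, div_le_div_iff_of_pos_right hpN,
      div_lt_div_iff_of_pos_right hpN, Nat.cast_le, Nat.cast_lt, hsplit]
    constructor
    · rintro ⟨h1, h2⟩
      have hc1 : (a+1) * p^(N-k) = p^(N-k) * (a+1) := mul_comm _ _
      have hc2 : (revd p k x + 1) * p^(N-k) = p^(N-k) * revd p k x + p^(N-k) := by ring
      have hq1 : revd p k x < a + 1 := by
        apply Nat.lt_of_mul_lt_mul_left (a := p^(N-k))
        omega
      have hq2 : a < revd p k x + 1 := by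
        apply Nat.lt_of_mul_lt_mul_right (a := p^(N-k))
        omega
      omega
    · rintro rfl
      have hc1 : revd p k x * p^(N-k) = p^(N-k) * revd p k x := mul_comm _ _
      have hc2 : (revd p k x + 1) * p^(N-k) = p^(N-k) * revd p k x + p^(N-k) := by ring
      omega
  rw [hmain]
  -- Step 4: revd p k x = a ↔ x % p^k = a'
  have ha'' : a' = revd p k a := ha'
  constructor
  · intro h
    have h2 := congrArg (revd p k) h
    rw [← revd_mod p k x, revd_revd p hp2, Nat.mod_mod_of_dvd _ dvd_rfl] at h2
    rw [h2, ha'']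
  · intro h
    rw [← revd_mod p k x, h, ha'', revd_revd p hp2, Nat.mod_eq_of_lt ha]
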